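/- Let N ≥ 3, let μ ≡ 0, and let λ > 0. If either (a) 0 < k ≤ 1 and p > 0, or (b) 1 < k < N-1 and 0 < p < (N-1)/(k-1), then the problem (1.1) has no positive solution. -/

import Mathlib

open MeasureTheory ENNReal Filter

noncomputable section

/-- The point `(y', t) ∈ ℝ^N` for `y' ∈ ℝ^{N-1}`, `t ∈ ℝ`. -/
def up (N : ℕ) (y' : EuclideanSpace ℝ (Fin (N - 1))) (t : ℝ) : EuclideanSpace ℝ (Fin N) :=
  (WithLp.equiv 2 (Fin N → ℝ)).symm fun i => if h : (i : ℕ) < N - 1 then y' ⟨i, h⟩ else t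

/-- The last coordinate `x_N` of `x ∈ ℝ^N`. -/
def ht (N : ℕ) (x : EuclideanSpace ℝ (Fin N)) : ℝ :=
  if h : N - 1 < N then x ⟨N - 1, h⟩ else 0

/-- Reflection `x̄ = (x', -x_N)` of `x = (x', x_N)` in the hyperplane `x_N = 0`. -/
def reflN (N : ℕ) (x : EuclideanSpace ℝ (Fin N)) : EuclideanSpace ℝ (Fin N) :=
  (WithLp.equiv 2 (Fin N → ℝ)).symm fun i => if (i : ℕ) < N - 1 then x i else -x i

/-- Surface area `σ_N` of the unit sphere in `ℝ^N` (equal to `N` times the unit ball volume). -/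
def sphereArea (N : ℕ) : ℝ :=
  N * (volume (Metric.ball (0 : EuclideanSpace ℝ (Fin N)) 1)).toReal

/-- The open upper half space `ℝ^N_+ = ℝ^{N-1} × (0,∞)`. -/
def upperHalf (N : ℕ) : Set (EuclideanSpace ℝ (Fin N)) := {x | 0 < ht N x}

/-- `H_u(x') = ∫_{ℝ^{N-1}} u(y',0)^p |x'-y'|^{-k} dy'`. -/
def Hu (N : ℕ) (p k : ℝ) (u : EuclideanSpace ℝ (Fin N) → ℝ)
    (x' : EuclideanSpace ℝ (Fin (N - 1))) : ℝ≥0∞ :=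
  ∫⁻ y', ENNReal.ofReal (u (up N y' 0)) ^ p * ENNReal.ofReal ‖x' - y'‖ ^ (-k)

/-- The Newtonian potential `U^ν(x) = (1/((N-2)σ_N)) ∫ |x-y|^{2-N} dν(y)`. -/
def NewtPot (N : ℕ) (ν : Measure (EuclideanSpace ℝ (Fin N)))
    (x : EuclideanSpace ℝ (Fin N)) : ℝ :=
  (((N : ℝ) - 2) * sphereArea N)⁻¹ * (∫⁻ y, ENNReal.ofReal ‖x - y‖ ^ ((2:ℝ) - N) ∂ν).toReal

/-- The Green potential `∫_{ℝ^N_+} G(x,y) dμ(y)` for the Neumann Green function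
`G(x,y) = (|x-y|^{2-N} + |x̄-y|^{2-N})/((N-2)σ_N)` of the half space. -/
def GreenPot (N : ℕ) (μ : Measure (EuclideanSpace ℝ (Fin N)))
    (x : EuclideanSpace ℝ (Fin N)) : ℝ :=
  (((N : ℝ) - 2) * sphereArea N)⁻¹ *
    (∫⁻ y, (ENNReal.ofReal ‖x - y‖ ^ ((2:ℝ) - N)
          + ENNReal.ofReal ‖reflN N x - y‖ ^ ((2:ℝ) - N)) ∂μ).toReal

/-- `μ` is a nonzero Radon (locally finite Borel) measure whose support is contained in the
open upper half space and whose Newtonian potential is finite everywhere. -/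
def AdmissibleMeasure (N : ℕ) (μ : Measure (EuclideanSpace ℝ (Fin N))) : Prop :=
  μ ≠ 0 ∧ IsLocallyFiniteMeasure μ ∧
    (∃ F : Set (EuclideanSpace ℝ (Fin N)), IsClosed F ∧ F ⊆ upperHalf N ∧ μ Fᶜ = 0) ∧
    (∀ x, (∫⁻ y, ENNReal.ofReal ‖x - y‖ ^ ((2:ℝ) - N) ∂μ) < ⊤)

/-- A measurable function `u` is a positive solution of problem (1.1):
(i) `u > 0` a.e. in `ℝ^N_+`, and for a.e. `x' ∈ ℝ^{N-1}`, `u(z) → u(x',0)` as `z → (x',0)`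
with `z ∈ ℝ^N_+`;
(ii) `H_u < ∞` a.e. in `ℝ^{N-1}`, and `∫_{ℝ^{N-1}} H_u(y')|x-(y',0)|^{2-N} dy' < ∞` for
a.e. `x ∈ ℝ^N_+`;
(iii) `u(x) = ∫_{ℝ^N_+} G(x,y) dμ(y)
　　　　+ (2λ/((N-2)σ_N)) ∫∫ u(z',0)^p |x-(y',0)|^{2-N} |y'-z'|^{-k} dz' dy'`
for a.e. `x ∈ ℝ^N_+`. -/
def IsPosSolution (N : ℕ) (p lam k : ℝ) (μ : Measure (EuclideanSpace ℝ (Fin N)))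
    (u : EuclideanSpace ℝ (Fin N) → ℝ) : Prop :=
  Measurable u ∧
  (∀ᵐ x ∂(volume.restrict (upperHalf N)), 0 < u x) ∧
  (∀ᵐ x' ∂(volume : Measure (EuclideanSpace ℝ (Fin (N - 1)))),
    Tendsto u (nhdsWithin (up N x' 0) (upperHalf N)) (nhds (u (up N x' 0)))) ∧
  (∀ᵐ x' ∂(volume : Measure (EuclideanSpace ℝ (Fin (N - 1)))), Hu N p k u x' < ⊤) ∧
  (∀ᵐ x ∂(volume.restrict (upperHalf N)),
    (∫⁻ y', Hu N p k u y' * ENNReal.ofReal ‖x - up N y' 0‖ ^ ((2:ℝ) - N)) < ⊤) ∧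
  (∀ᵐ x ∂(volume.restrict (upperHalf N)),
    ENNReal.ofReal (u x) =
      ENNReal.ofReal (((N : ℝ) - 2) * sphereArea N)⁻¹ *
        (∫⁻ y, (ENNReal.ofReal ‖x - y‖ ^ ((2:ℝ) - N)
              + ENNReal.ofReal ‖reflN N x - y‖ ^ ((2:ℝ) - N)) ∂μ) +
      ENNReal.ofReal (2 * lam / (((N : ℝ) - 2) * sphereArea N)) *
        ∫⁻ y', ENNReal.ofReal ‖x - up N y' 0‖ ^ ((2:ℝ) - N) * Hu N p k u y')

/-- A measurable function `u` is a positive solution of problem (1.1) with `μ ≡ 0`: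
conditions (i), (ii) as above and
(iii) `u(x) = (2λ/((N-2)σ_N)) ∫∫ u(z',0)^p |x-(y',0)|^{2-N} |y'-z'|^{-k} dz' dy'`
for a.e. `x ∈ ℝ^N_+`. -/
def IsPosSolution0 (N : ℕ) (p lam k : ℝ) (u : EuclideanSpace ℝ (Fin N) → ℝ) : Prop :=
  Measurable u ∧
  (∀ᵐ x ∂(volume.restrict (upperHalf N)), 0 < u x) ∧
  (∀ᵐ x' ∂(volume : Measure (EuclideanSpace ℝ (Fin (N - 1)))),
    Tendsto u (nhdsWithin (up N x' 0) (upperHalf N)) (nhds (u (up N x' 0)))) ∧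
  (∀ᵐ x' ∂(volume : Measure (EuclideanSpace ℝ (Fin (N - 1)))), Hu N p k u x' < ⊤) ∧
  (∀ᵐ x ∂(volume.restrict (upperHalf N)),
    (∫⁻ y', Hu N p k u y' * ENNReal.ofReal ‖x - up N y' 0‖ ^ ((2:ℝ) - N)) < ⊤) ∧
  (∀ᵐ x ∂(volume.restrict (upperHalf N)),
    ENNReal.ofReal (u x) =
      ENNReal.ofReal (2 * lam / (((N : ℝ) - 2) * sphereArea N)) *
        ∫⁻ y', ENNReal.ofReal ‖x - up N y' 0‖ ^ ((2:ℝ) - N) * Hu N p k u y')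

/-- The boundary trace `x' ↦ u(x',0)` belongs to `L^q_loc(ℝ^{N-1})`. -/
def BdryLocLp (N : ℕ) (q : ℝ) (u : EuclideanSpace ℝ (Fin N) → ℝ) : Prop :=
  ∀ K : Set (EuclideanSpace ℝ (Fin (N - 1))), IsCompact K →
    MemLp (fun x' => u (up N x' 0)) (ENNReal.ofReal q) (volume.restrict K)


section infra


lemma up_apply (N : ℕ) (w : EuclideanSpace ℝ (Fin (N-1))) (r : ℝ) (i : Fin N) :
    up N w r i = if h : (i : ℕ) < N - 1 then w ⟨i, h⟩ else r := rfl

lemma up_sub (N : ℕ) (w v : EuclideanSpace ℝ (Fin (N-1))) (r s : ℝ) :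
    up N w r - up N v s = up N (w - v) (r - s) := by
  ext i
  simp only [PiLp.sub_apply, up_apply]
  split <;> simp

lemma norm_sq_eucl {d : ℕ} (x : EuclideanSpace ℝ (Fin d)) : ‖x‖ ^ 2 = ∑ i, x i ^ 2 := by
  rw [EuclideanSpace.norm_eq, Real.sq_sqrt (by positivity)]
  exact Finset.sum_congr rfl fun i _ => sq_abs _

lemma norm_sq_up {N : ℕ} (hN : 1 ≤ N) (w : EuclideanSpace ℝ (Fin (N-1))) (r : ℝ) :
    ‖up N w r‖ ^ 2 = ‖w‖ ^ 2 + r ^ 2 := by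
  rw [norm_sq_eucl, norm_sq_eucl]
  set f : ℕ → ℝ := fun i => (if h : i < N - 1 then w ⟨i, h⟩ else r) ^ 2 with hf
  have h1 : ∑ i, up N w r i ^ 2 = ∑ i ∈ Finset.range N, f i := by
    rw [← Fin.sum_univ_eq_sum_range f N]
    exact Finset.sum_congr rfl fun i _ => rfl
  rw [h1]
  have hNN : N = (N - 1) + 1 := by omega
  rw [show Finset.range N = Finset.range ((N-1)+1) from by rw [← hNN], Finset.sum_range_succ]
  have h2 : f (N - 1) = r ^ 2 := by simp [hf]
  have h3 : ∑ i ∈ Finset.range (N-1), f i = ∑ i, w i ^ 2 := by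
    rw [← Fin.sum_univ_eq_sum_range f (N-1)]
    refine Finset.sum_congr rfl fun i _ => ?_
    simp [hf, i.isLt]
  rw [h2, h3]

lemma norm_up {N : ℕ} (hN : 1 ≤ N) (w : EuclideanSpace ℝ (Fin (N-1))) (r : ℝ) :
    ‖up N w r‖ = Real.sqrt (‖w‖ ^ 2 + r ^ 2) := by
  rw [← norm_sq_up hN w r, Real.sqrt_sq (norm_nonneg _)]

lemma norm_up_zero {N : ℕ} (hN : 1 ≤ N) (w : EuclideanSpace ℝ (Fin (N-1))) :
    ‖up N w 0‖ = ‖w‖ := by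
  rw [norm_up hN]; simp [Real.sqrt_sq (norm_nonneg w)]

lemma norm_up_sub_up {N : ℕ} (hN : 1 ≤ N) (w v : EuclideanSpace ℝ (Fin (N-1))) :
    ‖up N w 0 - up N v 0‖ = ‖w - v‖ := by
  rw [up_sub, sub_zero, norm_up_zero hN]

lemma ht_up {N : ℕ} (hN : 1 ≤ N) (w : EuclideanSpace ℝ (Fin (N-1))) (r : ℝ) :
    ht N (up N w r) = r := by
  have h : N - 1 < N := by omega
  simp only [ht, dif_pos h, up_apply]
  simp

lemma continuous_ht {N : ℕ} : Continuous (ht N) := by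
  unfold ht
  split
  · exact (EuclideanSpace.proj (⟨N-1, by omega⟩ : Fin N)).continuous
  · exact continuous_const

lemma isOpen_upperHalf {N : ℕ} : IsOpen (upperHalf N) :=
  isOpen_lt continuous_const continuous_ht

lemma measurableSet_upperHalf {N : ℕ} : MeasurableSet (upperHalf N) :=
  isOpen_upperHalf.measurableSet

lemma upperHalf_vol_pos {N : ℕ} (hN : 1 ≤ N) : 0 < volume (upperHalf N) := by
  refine isOpen_upperHalf.measure_pos volume ⟨up N 0 1, ?_⟩
  simp [upperHalf, Set.mem_setOf_eq, ht_up hN]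

lemma continuous_up0 {N : ℕ} : Continuous (fun w : EuclideanSpace ℝ (Fin (N-1)) => up N w 0) := by
  have h : Continuous fun w : EuclideanSpace ℝ (Fin (N-1)) =>
      (fun i : Fin N => if h : (i : ℕ) < N - 1 then w ⟨i, h⟩ else (0:ℝ)) := by
    refine continuous_pi fun i => ?_
    by_cases h : (i : ℕ) < N - 1
    · simp only [dif_pos h]
      exact (EuclideanSpace.proj (⟨(i:ℕ), h⟩ : Fin (N-1))).continuous
    · simp only [dif_neg h]
      exact continuous_const
  exact ((PiLp.continuousLinearEquiv 2 ℝ (fun _ : Fin N => ℝ)).symm.continuous).comp h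

lemma measurable_up0 {N : ℕ} :
    Measurable (fun w : EuclideanSpace ℝ (Fin (N-1)) => up N w 0) :=
  continuous_up0.measurable


end infra

section integrals


-- helper: antitone rpow for nonpositive exponents
lemma ennrpow_anti {x y : ℝ≥0∞} (h : x ≤ y) {e : ℝ} (he : e ≤ 0) : y ^ e ≤ x ^ e :=
  calc y ^ e = (y ^ (-e))⁻¹ := by rw [← ENNReal.rpow_neg, neg_neg]
    _ ≤ (x ^ (-e))⁻¹ := ENNReal.inv_le_inv.2 (ENNReal.rpow_le_rpow h (by linarith))
    _ = x ^ e := by rw [← ENNReal.rpow_neg, neg_neg]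

lemma measurable_kernel {d : ℕ} (e : ℝ) :
    Measurable (fun y : EuclideanSpace ℝ (Fin d) => ENNReal.ofReal ‖y‖ ^ e) :=
  ENNReal.continuous_rpow_const.measurable.comp measurable_norm.ennreal_ofReal

def ballC (d : ℕ) : ℝ :=
  (1 - (2:ℝ) ^ (-(d:ℝ))) * (volume (Metric.ball (0 : EuclideanSpace ℝ (Fin d)) 1)).toReal

lemma ballC_pos {d : ℕ} (hd : 1 ≤ d) : 0 < ballC d := by
  apply _root_.mul_pos
  · have h1 : (2:ℝ) ^ (-(d:ℝ)) < 1 := by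
      rw [Real.rpow_lt_one_iff_of_pos (by norm_num)]
      refine Or.inl ⟨one_lt_two, ?_⟩
      have : (0:ℝ) < d := by exact_mod_cast hd
      linarith
    linarith
  · exact ENNReal.toReal_pos (Metric.measure_ball_pos volume _ one_pos).ne'
      (measure_ball_lt_top).ne

lemma vol_ball_eucl {d : ℕ} (hd : 1 ≤ d) (x : EuclideanSpace ℝ (Fin d)) {r : ℝ} (hr : 0 ≤ r) :
    volume (Metric.ball x r) =
      ENNReal.ofReal (r ^ (d:ℕ)) * volume (Metric.ball (0 : EuclideanSpace ℝ (Fin d)) 1) := by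
  haveI : Nontrivial (EuclideanSpace ℝ (Fin d)) :=
    Module.nontrivial_of_finrank_pos (R := ℝ) (by rw [finrank_euclideanSpace_fin]; omega)
  rw [MeasureTheory.Measure.addHaar_ball (μ := volume) x hr, finrank_euclideanSpace_fin]

lemma annulusInt {d : ℕ} (hd : 1 ≤ d) (x : EuclideanSpace ℝ (Fin d)) {r s : ℝ}
    (hr : 0 < r) (hs : 0 ≤ s) :
    ENNReal.ofReal (r ^ ((d:ℝ) - s) * ballC d) ≤
      ∫⁻ y in Metric.ball x r \ Metric.ball x (r/2), ENNReal.ofReal ‖x - y‖ ^ (-s) := by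
  set V := volume (Metric.ball (0 : EuclideanSpace ℝ (Fin d)) 1) with hV
  have hVtop : V ≠ ⊤ := measure_ball_lt_top.ne
  have hV0 : V ≠ 0 := (Metric.measure_ball_pos volume _ one_pos).ne'
  set D := Metric.ball x r \ Metric.ball x (r/2) with hD
  have hDm : MeasurableSet D := measurableSet_ball.diff measurableSet_ball
  have step1 : ∫⁻ _ in D, (ENNReal.ofReal r) ^ (-s) ≤ ∫⁻ y in D, ENNReal.ofReal ‖x - y‖ ^ (-s) := by
    refine setLIntegral_mono
      (ENNReal.continuous_rpow_const.measurable.comp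
        ((measurable_const.sub measurable_id).norm.ennreal_ofReal)) fun y hy => ?_
    refine ennrpow_anti (ENNReal.ofReal_le_ofReal ?_) (by linarith)
    have : dist y x < r := Metric.mem_ball.1 hy.1
    rw [← dist_eq_norm]
    rw [dist_comm] at this
    exact this.le
  rw [setLIntegral_const] at step1
  have volD : volume D = ENNReal.ofReal (r ^ (d:ℕ) - (r/2) ^ (d:ℕ)) * V := by
    rw [hD, measure_diff (Metric.ball_subset_ball (by linarith)) measurableSet_ball.nullMeasurableSet
      (measure_ball_lt_top.ne), vol_ball_eucl hd x hr.le, vol_ball_eucl hd x (by linarith : (0:ℝ) ≤ r/2),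
      ← ENNReal.sub_mul (fun _ _ => hVtop), ← ENNReal.ofReal_sub _ (by positivity)]
  have hrd : (r/2:ℝ) ^ (d:ℕ) ≤ r ^ (d:ℕ) := pow_le_pow_left₀ (by positivity) (by linarith) d
  set vR := V.toReal with hvR
  have hVv : V = ENNReal.ofReal vR := (ENNReal.ofReal_toReal hVtop).symm
  calc ENNReal.ofReal (r ^ ((d:ℝ) - s) * ballC d)
      = ENNReal.ofReal (r ^ (-s) * ((r ^ (d:ℕ) - (r/2) ^ (d:ℕ)) * vR)) := by
        congr 1
        have h2 : (r/2) ^ (d:ℕ) = r ^ (d:ℕ) * (2:ℝ) ^ (-(d:ℝ)) := by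
          rw [div_pow, Real.rpow_neg (by norm_num), ← Real.rpow_natCast (2:ℝ) d]
          field_simp
        rw [h2, ballC,
          show (volume (Metric.ball (0 : EuclideanSpace ℝ (Fin d)) 1)).toReal = vR from rfl]
        rw [show r ^ (d:ℕ) = r ^ ((d:ℝ)) from (Real.rpow_natCast r d).symm,
          show r ^ ((d:ℝ) - s) = r ^ ((d:ℝ)) * r ^ (-s) from by
            rw [← Real.rpow_add hr]; ring_nf]
        ring
      _ ≤ (ENNReal.ofReal r) ^ (-s) * volume D := by
        rw [volD, ENNReal.ofReal_rpow_of_pos hr, hVv,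
          ← ENNReal.ofReal_mul (by linarith [hrd] : (0:ℝ) ≤ r ^ (d:ℕ) - (r/2) ^ (d:ℕ)),
          ← ENNReal.ofReal_mul (by positivity)]
      _ ≤ _ := step1

lemma ballInt {d : ℕ} (hd : 1 ≤ d) (x : EuclideanSpace ℝ (Fin d)) {r s : ℝ}
    (hr : 0 < r) (hs : 0 ≤ s) :
    ENNReal.ofReal (r ^ ((d:ℝ) - s) * ballC d) ≤
      ∫⁻ y in Metric.ball x r, ENNReal.ofReal ‖x - y‖ ^ (-s) := by
  refine le_trans (annulusInt hd x hr hs) ?_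
  exact lintegral_mono' (Measure.restrict_mono Set.diff_subset le_rfl) le_rfl

lemma divInt {d : ℕ} (hd : 1 ≤ d) {M : ℝ} (hM : 0 < M) :
    ∫⁻ y in {y : EuclideanSpace ℝ (Fin d) | M ≤ ‖y‖}, ENNReal.ofReal ‖y‖ ^ (-(d:ℝ)) = ⊤ := by
  set A : ℕ → Set (EuclideanSpace ℝ (Fin d)) :=
    fun n => Metric.ball 0 (2^(n+1) * M) \ Metric.ball 0 ((2^(n+1) * M)/2) with hA
  have hApow : ∀ n : ℕ, (2:ℝ)^(n+1) * M / 2 = 2^n * M := by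
    intro n; rw [pow_succ]; ring
  have hAm : ∀ n, MeasurableSet (A n) := fun n => measurableSet_ball.diff measurableSet_ball
  have hAsub : ∀ n, A n ⊆ {y : EuclideanSpace ℝ (Fin d) | M ≤ ‖y‖} := by
    intro n y hy
    have h2 : (2:ℝ)^n * M ≤ ‖y‖ := by
      have := hy.2
      rw [Metric.mem_ball, dist_zero_right, not_lt, hApow n] at this
      exact this
    have h3 : M ≤ (2:ℝ)^n * M := le_mul_of_one_le_left hM.le (one_le_pow₀ one_le_two)
    exact le_trans h3 h2
  have hdisj : Pairwise (Function.onFun Disjoint A) := by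
    intro m n hmn
    wlog h : m < n generalizing m n
    · exact (this hmn.symm (by omega)).symm
    refine Set.disjoint_left.2 fun y hym hyn => ?_
    have h1 : ‖y‖ < 2^(m+1) * M := by
      have := hym.1; rwa [Metric.mem_ball, dist_zero_right] at this
    have h2 : (2:ℝ)^n * M ≤ ‖y‖ := by
      have := hyn.2
      rw [Metric.mem_ball, dist_zero_right, not_lt, hApow n] at this
      exact this
    have : (2:ℝ)^(m+1) ≤ 2^n := pow_le_pow_right₀ one_le_two (by omega)
    nlinarith [hM]
  have hmeas : Measurable (fun y : EuclideanSpace ℝ (Fin d) => ENNReal.ofReal ‖y‖ ^ (-(d:ℝ))) :=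
    measurable_kernel _
  have key : ∀ n, ENNReal.ofReal (ballC d) ≤ ∫⁻ y in A n, ENNReal.ofReal ‖y‖ ^ (-(d:ℝ)) := by
    intro n
    have hr : 0 < (2:ℝ)^(n+1) * M := by positivity
    have := annulusInt hd (0 : EuclideanSpace ℝ (Fin d)) (r := 2^(n+1) * M) (s := (d:ℝ)) hr
      (by positivity)
    rw [sub_self, Real.rpow_zero, one_mul] at this
    refine le_trans this (le_of_eq ?_)
    refine setLIntegral_congr_fun (hAm n) (fun y _ => ?_)
    rw [zero_sub, norm_neg]
  have top_le : (⊤:ℝ≥0∞) ≤ ∫⁻ y in ⋃ n, A n, ENNReal.ofReal ‖y‖ ^ (-(d:ℝ)) := by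
    rw [lintegral_iUnion hAm hdisj]
    refine le_trans (le_of_eq ?_) (ENNReal.tsum_le_tsum key)
    exact (tsum_const_eq_top_of_ne_zero (by
      simp [ENNReal.ofReal_eq_zero, not_le, ballC_pos hd])).symm
  have : (⊤:ℝ≥0∞) ≤ ∫⁻ y in {y : EuclideanSpace ℝ (Fin d) | M ≤ ‖y‖},
      ENNReal.ofReal ‖y‖ ^ (-(d:ℝ)) := by
    refine le_trans top_le (lintegral_mono' (Measure.restrict_mono ?_ le_rfl) le_rfl)
    exact Set.iUnion_subset hAsub
  exact top_le_iff.1 this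


end integrals

section main
variable {N : ℕ} {k p lam : ℝ} {u : EuclideanSpace ℝ (Fin N) → ℝ}

/-- lower bound on the boundary trace at infinity -/
def TLB (N : ℕ) (u : EuclideanSpace ℝ (Fin N) → ℝ) (a : ℝ) : Prop :=
  ∃ c R : ℝ, 0 < c ∧ 1 ≤ R ∧ ∀ᵐ z' : EuclideanSpace ℝ (Fin (N-1)),
    R ≤ ‖z'‖ → ENNReal.ofReal c * ENNReal.ofReal ‖z'‖ ^ (-a) ≤ ENNReal.ofReal (u (up N z' 0))

/-- lower bound on `Hu` at infinity -/
def HuLB (N : ℕ) (p k : ℝ) (u : EuclideanSpace ℝ (Fin N) → ℝ) (b : ℝ) : Prop :=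
  ∃ c R : ℝ, 0 < c ∧ 1 ≤ R ∧ ∀ z' : EuclideanSpace ℝ (Fin (N-1)),
    R ≤ ‖z'‖ → ENNReal.ofReal c * ENNReal.ofReal ‖z'‖ ^ (-b) ≤ Hu N p k u z'

lemma ennrpow_ofReal_ne_top {x : ℝ} (hx : 0 < x) (e : ℝ) : ENNReal.ofReal x ^ e ≠ ⊤ := by
  rw [ENNReal.ofReal_rpow_of_pos hx]; exact ENNReal.ofReal_ne_top

lemma huStep (hN : 3 ≤ N) (hp : 0 < p) (hk : 0 < k) (hkd : k < (N:ℝ) - 1)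
    {a : ℝ} (ha : 0 < a) (h : TLB N u a) :
    HuLB N p k u (p * a + k - ((N:ℝ) - 1)) := by
  obtain ⟨c, R, hc, hR, hae⟩ := h
  set d : ℕ := N - 1 with hdd
  have hd1 : 1 ≤ d := by omega
  have hdr : ((d:ℕ):ℝ) = (N:ℝ) - 1 := by
    rw [hdd]; push_cast [Nat.cast_sub (by omega : 1 ≤ N)]; ring
  have hbc := ballC_pos hd1
  refine ⟨c ^ p * (3/2) ^ (-(a*p)) * ((1/2) ^ ((d:ℝ)-k) * ballC d), 2*R,
    by positivity, by linarith, fun y' hy' => ?_⟩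
  have hy'0 : (0:ℝ) < ‖y'‖ := by linarith
  set r : ℝ := ‖y'‖ / 2 with hr
  have hr0 : 0 < r := by positivity
  -- pointwise bound on the ball
  have hball : ∀ᵐ z' : EuclideanSpace ℝ (Fin (N-1)) ∂(volume.restrict (Metric.ball y' r)),
      (ENNReal.ofReal c) ^ p * ENNReal.ofReal ((3/2) * ‖y'‖) ^ (-(a*p)) *
        ENNReal.ofReal ‖y' - z'‖ ^ (-k) ≤
      ENNReal.ofReal (u (up N z' 0)) ^ p * ENNReal.ofReal ‖y' - z'‖ ^ (-k) := by
    filter_upwards [MeasureTheory.ae_restrict_mem measurableSet_ball,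
      MeasureTheory.ae_restrict_of_ae hae] with z' hz' hz2
    have hdist : ‖z' - y'‖ < r := by
      rw [← dist_eq_norm]; exact Metric.mem_ball.1 hz'
    have hz'lb : R ≤ ‖z'‖ := by
      have := norm_sub_norm_le z' y'
      have h2 : ‖y'‖ - ‖z'‖ ≤ ‖z' - y'‖ := by
        have := norm_sub_norm_le y' z'
        rwa [norm_sub_rev] at this
      have : ‖y'‖ - r ≤ ‖z'‖ := by linarith
      rw [hr] at this; linarith
    have hz'ub : ‖z'‖ ≤ (3/2) * ‖y'‖ := by
      have := norm_sub_norm_le z' y'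
      have : ‖z'‖ - ‖y'‖ ≤ ‖z' - y'‖ := this
      rw [hr] at hdist; linarith
    gcongr
    have h1 : ENNReal.ofReal c * ENNReal.ofReal ‖z'‖ ^ (-a) ≤ ENNReal.ofReal (u (up N z' 0)) :=
      hz2 hz'lb
    have h2 : ENNReal.ofReal ((3/2) * ‖y'‖) ^ (-a) ≤ ENNReal.ofReal ‖z'‖ ^ (-a) :=
      ennrpow_anti (ENNReal.ofReal_le_ofReal hz'ub) (by linarith)
    calc ENNReal.ofReal c ^ p * ENNReal.ofReal (3/2 * ‖y'‖) ^ (-(a*p))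
        = (ENNReal.ofReal c * ENNReal.ofReal (3/2 * ‖y'‖) ^ (-a)) ^ p := by
          rw [ENNReal.mul_rpow_of_nonneg _ _ hp.le, ← ENNReal.rpow_mul]
          ring_nf
      _ ≤ (ENNReal.ofReal c * ENNReal.ofReal ‖z'‖ ^ (-a)) ^ p := by
          exact ENNReal.rpow_le_rpow (by exact mul_le_mul_right h2 _) hp.le
      _ ≤ ENNReal.ofReal (u (up N z' 0)) ^ p := ENNReal.rpow_le_rpow h1 hp.le
  -- assemble
  have hC1top : (ENNReal.ofReal c) ^ p * ENNReal.ofReal ((3/2) * ‖y'‖) ^ (-(a*p)) ≠ ⊤ :=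
    ENNReal.mul_ne_top (ennrpow_ofReal_ne_top hc p) (ennrpow_ofReal_ne_top (by linarith) _)
  calc ENNReal.ofReal (c ^ p * (3/2) ^ (-(a*p)) * ((1/2) ^ ((d:ℝ)-k) * ballC d)) *
        ENNReal.ofReal ‖y'‖ ^ (-(p * a + k - ((N:ℝ) - 1)))
      = (ENNReal.ofReal c) ^ p * ENNReal.ofReal ((3/2) * ‖y'‖) ^ (-(a*p)) *
          ENNReal.ofReal (r ^ ((d:ℝ) - k) * ballC d) := by
        rw [ENNReal.ofReal_rpow_of_pos hy'0, ENNReal.ofReal_rpow_of_pos hc,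
          ENNReal.ofReal_rpow_of_pos (by linarith : (0:ℝ) < (3/2) * ‖y'‖),
          ← ENNReal.ofReal_mul (by positivity), ← ENNReal.ofReal_mul (by positivity),
          ← ENNReal.ofReal_mul (by positivity)]
        congr 1
        rw [Real.mul_rpow (by norm_num) hy'0.le, hr,
          show ‖y'‖/2 = (1/2) * ‖y'‖ by ring,
          Real.mul_rpow (by norm_num) hy'0.le, ← hdr,
          show (-(p * a + k - ((d:ℝ)))) = (-(a*p)) + ((d:ℝ)-k) from by ring,
          Real.rpow_add hy'0]
        ring
      _ ≤ (ENNReal.ofReal c) ^ p * ENNReal.ofReal ((3/2) * ‖y'‖) ^ (-(a*p)) *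
          ∫⁻ z' in Metric.ball y' r, ENNReal.ofReal ‖y' - z'‖ ^ (-k) := by
        exact mul_le_mul_right (ballInt hd1 y' hr0 hk.le) _
      _ = ∫⁻ z' in Metric.ball y' r,
            (ENNReal.ofReal c) ^ p * ENNReal.ofReal ((3/2) * ‖y'‖) ^ (-(a*p)) *
            ENNReal.ofReal ‖y' - z'‖ ^ (-k) := by
        rw [MeasureTheory.lintegral_const_mul' _ _ hC1top]
      _ ≤ ∫⁻ z' in Metric.ball y' r,
            ENNReal.ofReal (u (up N z' 0)) ^ p * ENNReal.ofReal ‖y' - z'‖ ^ (-k) :=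
        MeasureTheory.lintegral_mono_ae hball
      _ ≤ Hu N p k u y' := MeasureTheory.setLIntegral_le_lintegral _ _

lemma huInit (hN : 3 ≤ N) (hp : 0 < p) (hk : 0 < k)
    (hsol : IsPosSolution0 N p lam k u) : HuLB N p k u k := by
  obtain ⟨humeas, hpos, -, -, -, hrep⟩ := hsol
  set T : EuclideanSpace ℝ (Fin (N-1)) → ℝ≥0∞ :=
    fun z' => ENNReal.ofReal (u (up N z' 0)) with hT
  set S : Set (EuclideanSpace ℝ (Fin (N-1))) := {z' | 0 < u (up N z' 0)} with hS
  have hSmeas : MeasurableSet S :=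
    measurableSet_lt measurable_const (humeas.comp measurable_up0)
  -- S has positive measure
  have hSpos : volume S ≠ 0 := by
    intro h0
    have hT0 : ∀ᵐ z' : EuclideanSpace ℝ (Fin (N-1)), u (up N z' 0) ≤ 0 := by
      rw [MeasureTheory.ae_iff]
      convert h0 using 2
      ext z'; simp [hS, not_le]
    have hHu0 : ∀ x', Hu N p k u x' = 0 := by
      intro x'
      rw [Hu, show (0:ℝ≥0∞) = ∫⁻ _ : EuclideanSpace ℝ (Fin (N-1)), 0 from
        (MeasureTheory.lintegral_zero).symm]
      refine MeasureTheory.lintegral_congr_ae ?_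
      filter_upwards [hT0] with z' hz'
      rw [ENNReal.ofReal_eq_zero.2 hz', ENNReal.zero_rpow_of_pos hp, zero_mul]
    have hu0 : ∀ᵐ x ∂(volume.restrict (upperHalf N)), ENNReal.ofReal (u x) = 0 := by
      filter_upwards [hrep] with x hx
      rw [hx]
      have : ∀ y' : EuclideanSpace ℝ (Fin (N-1)),
          ENNReal.ofReal ‖x - up N y' 0‖ ^ ((2:ℝ) - N) * Hu N p k u y' = 0 := by
        intro y'; rw [hHu0 y', mul_zero]
      rw [MeasureTheory.lintegral_congr this, MeasureTheory.lintegral_zero, mul_zero]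
    have hfalse : ∀ᵐ x ∂(volume.restrict (upperHalf N)), False := by
      filter_upwards [hpos, hu0] with x h1 h2
      rw [ENNReal.ofReal_eq_zero] at h2
      linarith
    have : volume.restrict (upperHalf N) = 0 := by
      rw [← MeasureTheory.ae_eq_bot, ← Filter.eventually_false_iff_eq_bot]
      exact hfalse
    have h2 := upperHalf_vol_pos (N := N) (by omega)
    rw [← MeasureTheory.Measure.restrict_apply_univ, this] at h2
    simp at h2
  -- find a good piece S_m
  set Sm : ℕ → Set (EuclideanSpace ℝ (Fin (N-1))) :=
    fun m => {z' | ‖z'‖ ≤ m + 1 ∧ 1/(m+1 : ℝ) ≤ u (up N z' 0)} with hSm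
  have hSmmeas : ∀ m, MeasurableSet (Sm m) := by
    intro m
    refine MeasurableSet.inter ?_ ?_
    · exact measurableSet_le measurable_norm measurable_const
    · exact measurableSet_le measurable_const (humeas.comp measurable_up0)
  have hcover : S ⊆ ⋃ m, Sm m := by
    intro z' hz'
    have hz2 : 0 < u (up N z' 0) := hz'
    obtain ⟨m1, hm1⟩ := exists_nat_one_div_lt hz2
    obtain ⟨m2, hm2⟩ := exists_nat_ge ‖z'‖
    refine Set.mem_iUnion.2 ⟨max m1 m2, ?_, ?_⟩
    · have : (m2:ℝ) ≤ ((max m1 m2 : ℕ):ℝ) := by exact_mod_cast Nat.le_max_right m1 m2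
      linarith
    · have h1 : (1:ℝ)/((max m1 m2 : ℕ) + 1) ≤ 1/(m1+1) := by
        apply one_div_le_one_div_of_le (by positivity)
        have : (m1:ℝ) ≤ (max m1 m2 : ℕ) := by exact_mod_cast Nat.le_max_left m1 m2
        linarith
      linarith
  obtain ⟨m, hm⟩ : ∃ m, volume (Sm m) ≠ 0 := by
    by_contra hall
    push_neg at hall
    exact hSpos (MeasureTheory.measure_mono_null hcover
      (MeasureTheory.measure_iUnion_null hall))
  have hmtop : volume (Sm m) ≠ ⊤ := by
    have hsub : Sm m ⊆ Metric.closedBall 0 ((m:ℝ)+1) := by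
      intro z' hz'
      simpa [Metric.mem_closedBall, dist_zero_right] using hz'.1
    exact ne_of_lt (lt_of_le_of_lt (MeasureTheory.measure_mono hsub)
      MeasureTheory.measure_closedBall_lt_top)
  set ν : ℝ := (volume (Sm m)).toReal with hν
  have hν0 : 0 < ν := ENNReal.toReal_pos hm hmtop
  refine ⟨(1/(m+1:ℝ)) ^ p * 2 ^ (-k) * ν, max 1 ((m:ℝ)+1), by positivity,
    le_max_left _ _, fun y' hy' => ?_⟩
  have hy1 : (1:ℝ) ≤ ‖y'‖ := le_trans (le_max_left _ _) hy'
  have hym : (m:ℝ)+1 ≤ ‖y'‖ := le_trans (le_max_right _ _) hy'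
  have hy'0 : (0:ℝ) < ‖y'‖ := by linarith
  have hlow : ∀ z' ∈ Sm m,
      ENNReal.ofReal (1/(m+1:ℝ)) ^ p * ENNReal.ofReal (2 * ‖y'‖) ^ (-k) ≤
        ENNReal.ofReal (u (up N z' 0)) ^ p * ENNReal.ofReal ‖y' - z'‖ ^ (-k) := by
    intro z' hz'
    have h1 : ENNReal.ofReal (1/(m+1:ℝ)) ^ p ≤ ENNReal.ofReal (u (up N z' 0)) ^ p :=
      ENNReal.rpow_le_rpow (ENNReal.ofReal_le_ofReal hz'.2) hp.le
    have h2 : ‖y' - z'‖ ≤ 2 * ‖y'‖ := by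
      refine le_trans (norm_sub_le _ _) ?_
      have := hz'.1
      linarith
    exact mul_le_mul' h1 (ennrpow_anti (ENNReal.ofReal_le_ofReal h2) (by linarith))
  calc ENNReal.ofReal ((1/(m+1:ℝ)) ^ p * 2 ^ (-k) * ν) * ENNReal.ofReal ‖y'‖ ^ (-k)
      = ENNReal.ofReal (1/(m+1:ℝ)) ^ p * ENNReal.ofReal (2 * ‖y'‖) ^ (-k) * volume (Sm m) := by
        rw [ENNReal.ofReal_rpow_of_pos hy'0, ENNReal.ofReal_rpow_of_pos (by positivity),
          ENNReal.ofReal_rpow_of_pos (by linarith : (0:ℝ) < 2 * ‖y'‖),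
          show volume (Sm m) = ENNReal.ofReal ν from (ENNReal.ofReal_toReal hmtop).symm,
          ← ENNReal.ofReal_mul (by positivity), ← ENNReal.ofReal_mul (by positivity),
          ← ENNReal.ofReal_mul (by positivity)]
        congr 1
        rw [Real.mul_rpow (by norm_num) hy'0.le]
        ring
      _ = ∫⁻ _ in Sm m, ENNReal.ofReal (1/(m+1:ℝ)) ^ p * ENNReal.ofReal (2 * ‖y'‖) ^ (-k) := by
        rw [MeasureTheory.setLIntegral_const]
      _ ≤ ∫⁻ z' in Sm m,
            ENNReal.ofReal (u (up N z' 0)) ^ p * ENNReal.ofReal ‖y' - z'‖ ^ (-k) := by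
        refine MeasureTheory.setLIntegral_mono
          ((ENNReal.continuous_rpow_const.measurable.comp
            ((humeas.comp measurable_up0).ennreal_ofReal)).mul
            (ENNReal.continuous_rpow_const.measurable.comp
              ((measurable_const.sub measurable_id).norm.ennreal_ofReal))) hlow
      _ ≤ Hu N p k u y' := MeasureTheory.setLIntegral_le_lintegral _ _

lemma measurable_Hu (humeas : Measurable u) : Measurable (Hu N p k u) := by
  have hg : Measurable (fun q : (EuclideanSpace ℝ (Fin (N-1))) × (EuclideanSpace ℝ (Fin (N-1))) =>
      ENNReal.ofReal (u (up N q.2 0)) ^ p * ENNReal.ofReal ‖q.1 - q.2‖ ^ (-k)) := by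
    refine Measurable.mul ?_ ?_
    · exact ENNReal.continuous_rpow_const.measurable.comp
        ((humeas.comp (measurable_up0.comp measurable_snd)).ennreal_ofReal)
    · exact ENNReal.continuous_rpow_const.measurable.comp
        (((measurable_fst.sub measurable_snd).norm).ennreal_ofReal)
  exact hg.lintegral_prod_right'

lemma huContra (hN : 3 ≤ N) (hsol : IsPosSolution0 N p lam k u) {b : ℝ} (hb : b ≤ 1)
    (h : HuLB N p k u b) : False := by
  obtain ⟨cH, RH, hcH, hRH, hHu⟩ := h
  obtain ⟨humeas, -, -, -, hfin, -⟩ := hsol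
  set d : ℕ := N - 1 with hdd
  have hd1 : 1 ≤ d := by omega
  have hdr : ((d:ℕ):ℝ) = (N:ℝ) - 1 := by
    rw [hdd]; push_cast [Nat.cast_sub (by omega : 1 ≤ N)]; ring
  -- pick a point where the finiteness condition holds
  have hne : volume.restrict (upperHalf N) ≠ 0 := by
    intro h0
    have h2 := upperHalf_vol_pos (N := N) (by omega)
    rw [← MeasureTheory.Measure.restrict_apply_univ, h0] at h2
    simp at h2
  haveI : (MeasureTheory.ae (volume.restrict (upperHalf N))).NeBot :=
    MeasureTheory.ae_neBot.2 hne
  obtain ⟨x0, hx0⟩ := hfin.exists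
  set M : ℝ := max RH (max 1 ‖x0‖) with hM
  have hM1 : (1:ℝ) ≤ M := le_trans (le_max_left _ _) (le_max_right _ _)
  have hMR : RH ≤ M := le_max_left _ _
  have hMx : ‖x0‖ ≤ M := le_trans (le_max_right _ _) (le_max_right _ _)
  have key : ∀ y' : EuclideanSpace ℝ (Fin (N-1)), M ≤ ‖y'‖ →
      ENNReal.ofReal (cH * 2 ^ ((2:ℝ) - N)) * (ENNReal.ofReal ‖y'‖ ^ (-(d:ℝ))) ≤
        Hu N p k u y' * ENNReal.ofReal ‖x0 - up N y' 0‖ ^ ((2:ℝ) - N) := by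
    intro y' hy'
    have hy1 : (1:ℝ) ≤ ‖y'‖ := le_trans hM1 hy'
    have hy0 : (0:ℝ) < ‖y'‖ := by linarith
    have hK : ENNReal.ofReal (2 * ‖y'‖) ^ ((2:ℝ) - N) ≤
        ENNReal.ofReal ‖x0 - up N y' 0‖ ^ ((2:ℝ) - N) := by
      refine ennrpow_anti (ENNReal.ofReal_le_ofReal ?_) (by
        have : (3:ℝ) ≤ N := by exact_mod_cast hN
        linarith)
      refine le_trans (norm_sub_le _ _) ?_
      rw [norm_up_zero (by omega : 1 ≤ N)]
      linarith
    have hHu' : ENNReal.ofReal cH * ENNReal.ofReal ‖y'‖ ^ (-b) ≤ Hu N p k u y' :=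
      hHu y' (le_trans hMR hy')
    calc ENNReal.ofReal (cH * 2 ^ ((2:ℝ) - N)) * (ENNReal.ofReal ‖y'‖ ^ (-(d:ℝ)))
        ≤ ENNReal.ofReal (cH * 2 ^ ((2:ℝ) - N)) * (ENNReal.ofReal ‖y'‖ ^ ((-b) + ((2:ℝ) - N))) := by
          refine mul_le_mul_right ?_ _
          rw [ENNReal.ofReal_rpow_of_pos hy0, ENNReal.ofReal_rpow_of_pos hy0]
          refine ENNReal.ofReal_le_ofReal ?_
          refine Real.rpow_le_rpow_of_exponent_le hy1 ?_
          rw [hdr]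
          have : (3:ℝ) ≤ N := by exact_mod_cast hN
          linarith
      _ = (ENNReal.ofReal cH * ENNReal.ofReal ‖y'‖ ^ (-b)) *
            (ENNReal.ofReal (2 * ‖y'‖) ^ ((2:ℝ) - N)) := by
          rw [ENNReal.ofReal_rpow_of_pos hy0, ENNReal.ofReal_rpow_of_pos hy0,
            ENNReal.ofReal_rpow_of_pos (by linarith : (0:ℝ) < 2 * ‖y'‖),
            ← ENNReal.ofReal_mul (mul_nonneg hcH.le (by positivity)),
            ← ENNReal.ofReal_mul hcH.le, ← ENNReal.ofReal_mul (by positivity)]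
          congr 1
          rw [Real.rpow_add hy0, Real.mul_rpow (by norm_num) hy0.le]
          ring
      _ ≤ Hu N p k u y' * ENNReal.ofReal ‖x0 - up N y' 0‖ ^ ((2:ℝ) - N) :=
          mul_le_mul' hHu' hK
  -- and the integral over the far region is infinite
  have hreg : MeasurableSet {y' : EuclideanSpace ℝ (Fin (N-1)) | M ≤ ‖y'‖} :=
    measurableSet_le measurable_const measurable_norm
  have hdiv : (⊤:ℝ≥0∞) ≤ ∫⁻ y', Hu N p k u y' *
      ENNReal.ofReal ‖x0 - up N y' 0‖ ^ ((2:ℝ) - N) := by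
    have h1 : (⊤:ℝ≥0∞) = ENNReal.ofReal (cH * 2 ^ ((2:ℝ) - N)) *
        ∫⁻ y' in {y' : EuclideanSpace ℝ (Fin (N-1)) | M ≤ ‖y'‖},
          ENNReal.ofReal ‖y'‖ ^ (-(d:ℝ)) := by
      rw [divInt hd1 (lt_of_lt_of_le one_pos hM1), ENNReal.mul_top (by
        simp [ENNReal.ofReal_eq_zero, not_le]
        positivity)]
    rw [h1, ← MeasureTheory.lintegral_const_mul' _ _ ENNReal.ofReal_ne_top]
    refine le_trans (MeasureTheory.setLIntegral_mono
      ((measurable_Hu humeas).mul (ENNReal.continuous_rpow_const.measurable.comp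
        ((measurable_const.sub measurable_up0).norm.ennreal_ofReal)))
      (fun y' hy' => key y' hy'))
      (MeasureTheory.setLIntegral_le_lintegral _ _)
  rw [top_le_iff.1 hdiv] at hx0
  exact lt_irrefl _ hx0

lemma sphereArea_pos (hN : 3 ≤ N) : 0 < sphereArea N := by
  unfold sphereArea
  apply _root_.mul_pos (by positivity)
  exact ENNReal.toReal_pos (Metric.measure_ball_pos volume _ one_pos).ne'
    measure_ball_lt_top.ne

lemma trace (hN : 3 ≤ N) (hlam : 0 < lam) (hsol : IsPosSolution0 N p lam k u)
    {b : ℝ} (hb : 0 < b) (h : HuLB N p k u b) : TLB N u (b - 1) := by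
  classical
  obtain ⟨cH, RH, hcH, hRH, hHu⟩ := h
  obtain ⟨humeas, hpos, htrace, hHufin, hfin, hrep⟩ := hsol
  set d : ℕ := N - 1 with hdd
  have hd1 : 1 ≤ d := by omega
  have hdr : ((d:ℕ):ℝ) = (N:ℝ) - 1 := by
    rw [hdd]; push_cast [Nat.cast_sub (by omega : 1 ≤ N)]; ring
  have hN3 : (3:ℝ) ≤ (N:ℝ) := by exact_mod_cast hN
  have hbc := ballC_pos hd1
  set creal : ℝ := 2 * lam / (((N:ℝ) - 2) * sphereArea N) with hcreal
  have hcrealpos : 0 < creal := by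
    rw [hcreal]
    exact div_pos (by linarith) (_root_.mul_pos (by linarith) (sphereArea_pos hN))
  set c : ℝ≥0∞ := ENNReal.ofReal creal with hc
  have hc0 : c ≠ 0 := (ENNReal.ofReal_pos.2 hcrealpos).ne'
  have hctop : c ≠ ⊤ := ENNReal.ofReal_ne_top
  -- good set where the representation formula holds
  have hGae : ∀ᵐ x : EuclideanSpace ℝ (Fin N), x ∈ upperHalf N →
      ENNReal.ofReal (u x) = c * ∫⁻ y', ENNReal.ofReal ‖x - up N y' 0‖ ^ ((2:ℝ) - N) *
        Hu N p k u y' :=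
    (MeasureTheory.ae_restrict_iff' measurableSet_upperHalf).1 hrep
  set Bad : Set (EuclideanSpace ℝ (Fin N)) := {x | ¬ (x ∈ upperHalf N →
      ENNReal.ofReal (u x) = c * ∫⁻ y', ENNReal.ofReal ‖x - up N y' 0‖ ^ ((2:ℝ) - N) *
        Hu N p k u y')} with hBad
  have hBad0 : volume Bad = 0 := hGae
  refine ⟨creal * ((1/2) * ballC d) * (cH * (3/2) ^ (-b)), max 1 (2 * RH),
    by positivity, le_max_left _ _, ?_⟩
  filter_upwards [htrace] with x' hx'tr hx'n
  -- hx'tr : Tendsto u (nhdsWithin (up N x' 0) (upperHalf N)) (nhds (u (up N x' 0)))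
  -- hx'n : max 1 (2*RH) ≤ ‖x'‖
  have hx1 : (1:ℝ) ≤ ‖x'‖ := le_trans (le_max_left _ _) hx'n
  have hx2R : 2 * RH ≤ ‖x'‖ := le_trans (le_max_right _ _) hx'n
  have hx0 : (0:ℝ) < ‖x'‖ := by linarith
  set x0 : EuclideanSpace ℝ (Fin N) := up N x' 0 with hx0def
  -- a sequence of good points converging to the boundary point
  have hseq : ∀ j : ℕ, ∃ z : EuclideanSpace ℝ (Fin N), z ∈ upperHalf N ∧
      (ENNReal.ofReal (u z) = c * ∫⁻ y', ENNReal.ofReal ‖z - up N y' 0‖ ^ ((2:ℝ) - N) *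
        Hu N p k u y') ∧ dist z x0 < 1/(j+1) := by
    intro j
    set B : Set (EuclideanSpace ℝ (Fin N)) :=
      Metric.ball x0 (1/(j+1)) ∩ upperHalf N with hB
    have hBopen : IsOpen B := Metric.isOpen_ball.inter isOpen_upperHalf
    have hBne : B.Nonempty := by
      refine ⟨up N x' (1/(2*(j+1))), ?_, ?_⟩
      · rw [Metric.mem_ball, dist_eq_norm, up_sub, sub_self, sub_zero,
          norm_up (by omega : 1 ≤ N),
          show (‖(0 : EuclideanSpace ℝ (Fin (N-1)))‖^2 : ℝ) = 0 by simp,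
          zero_add, Real.sqrt_sq (by positivity)]
        have hj : (0:ℝ) < (j:ℝ) + 1 := by positivity
        rw [div_lt_div_iff₀ (by positivity) hj]
        nlinarith
      · show 0 < ht N _
        rw [ht_up (by omega : 1 ≤ N)]
        positivity
    have hBpos : 0 < volume B := hBopen.measure_pos volume hBne
    have hBdiff : (B \ Bad).Nonempty := by
      by_contra hcon
      rw [Set.not_nonempty_iff_eq_empty, Set.diff_eq_empty] at hcon
      exact absurd (MeasureTheory.measure_mono_null hcon hBad0) hBpos.ne'
    obtain ⟨z, hzB, hzG⟩ := hBdiff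
    refine ⟨z, hzB.2, ?_, Metric.mem_ball.1 hzB.1⟩
    have : z ∈ upperHalf N → _ := not_not.1 hzG
    exact this hzB.2
  choose z hz1 hz2 hz3 using hseq
  have hzlim : Filter.Tendsto z Filter.atTop (nhds x0) := by
    refine tendsto_iff_dist_tendsto_zero.2 ?_
    refine squeeze_zero (fun j => dist_nonneg) (fun j => (hz3 j).le) ?_
    exact tendsto_one_div_add_atTop_nhds_zero_nat
  have hzin : Filter.Tendsto z Filter.atTop (nhdsWithin x0 (upperHalf N)) :=
    tendsto_nhdsWithin_iff.2 ⟨hzlim, Filter.Eventually.of_forall hz1⟩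
  have hulim : Filter.Tendsto (fun j => ENNReal.ofReal (u (z j))) Filter.atTop
      (nhds (ENNReal.ofReal (u x0))) := ENNReal.tendsto_ofReal (hx'tr.comp hzin)
  set f : ℕ → EuclideanSpace ℝ (Fin (N-1)) → ℝ≥0∞ := fun j y' =>
    ENNReal.ofReal ‖z j - up N y' 0‖ ^ ((2:ℝ) - N) * Hu N p k u y' with hf
  have hfm : ∀ j, Measurable (f j) := by
    intro j
    exact (ENNReal.continuous_rpow_const.measurable.comp
      ((measurable_const.sub measurable_up0).norm.ennreal_ofReal)).mul
      (measurable_Hu humeas)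
  set L : ℝ≥0∞ := ENNReal.ofReal (u x0) with hL
  have hulim' : Filter.Tendsto (fun j => c * ∫⁻ y', f j y') Filter.atTop (nhds L) := by
    refine hulim.congr fun j => ?_
    rw [hz2 j]
  have hcan : ∀ x : ℝ≥0∞, c⁻¹ * (c * x) = x := fun x => by
    rw [← mul_assoc, ENNReal.inv_mul_cancel hc0 hctop, one_mul]
  have hlimI : Filter.Tendsto (fun j => ∫⁻ y', f j y') Filter.atTop (nhds (c⁻¹ * L)) := by
    have h2 := ENNReal.Tendsto.const_mul (a := c⁻¹) hulim'
      (Or.inr (ENNReal.inv_ne_top.2 hc0))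
    simpa only [hcan] using h2
  have hliminf : Filter.liminf (fun j => ∫⁻ y', f j y') Filter.atTop = c⁻¹ * L :=
    hlimI.liminf_eq
  have hFatou : ∫⁻ y', Filter.liminf (fun j => f j y') Filter.atTop ≤ c⁻¹ * L := by
    rw [← hliminf]
    exact MeasureTheory.lintegral_liminf_le hfm
  -- pointwise identification of the liminf
  have hptwise : ∀ᵐ y' : EuclideanSpace ℝ (Fin (N-1)),
      ENNReal.ofReal ‖x0 - up N y' 0‖ ^ ((2:ℝ) - N) * Hu N p k u y' ≤
        Filter.liminf (fun j => f j y') Filter.atTop := by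
    filter_upwards [hHufin] with y' hy'fin
    have htK : Filter.Tendsto (fun j => ENNReal.ofReal ‖z j - up N y' 0‖ ^ ((2:ℝ) - N))
        Filter.atTop (nhds (ENNReal.ofReal ‖x0 - up N y' 0‖ ^ ((2:ℝ) - N))) := by
      have hcont : Continuous fun w : EuclideanSpace ℝ (Fin N) =>
          ENNReal.ofReal ‖w - up N y' 0‖ ^ ((2:ℝ) - N) :=
        ENNReal.continuous_rpow_const.comp
          (ENNReal.continuous_ofReal.comp (continuous_id.sub continuous_const).norm)
      exact (hcont.tendsto x0).comp hzlim
    have htf : Filter.Tendsto (fun j => f j y') Filter.atTop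
        (nhds (ENNReal.ofReal ‖x0 - up N y' 0‖ ^ ((2:ℝ) - N) * Hu N p k u y')) :=
      ENNReal.Tendsto.mul_const htK (Or.inr hy'fin.ne)
    exact le_of_eq htf.liminf_eq.symm
  have hmain : c * ∫⁻ y', ENNReal.ofReal ‖x0 - up N y' 0‖ ^ ((2:ℝ) - N) * Hu N p k u y' ≤ L := by
    have h1 : ∫⁻ y', ENNReal.ofReal ‖x0 - up N y' 0‖ ^ ((2:ℝ) - N) * Hu N p k u y' ≤ c⁻¹ * L :=
      le_trans (MeasureTheory.lintegral_mono_ae hptwise) hFatou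
    calc c * ∫⁻ y', ENNReal.ofReal ‖x0 - up N y' 0‖ ^ ((2:ℝ) - N) * Hu N p k u y'
        ≤ c * (c⁻¹ * L) := mul_le_mul_right h1 _
      _ = L := by rw [← mul_assoc, ENNReal.mul_inv_cancel hc0 hctop, one_mul]
  -- lower bound the integral over a ball
  set r : ℝ := ‖x'‖ / 2 with hrdef
  have hr0 : 0 < r := by positivity
  have hball : ∀ y' ∈ Metric.ball x' r,
      ENNReal.ofReal ‖x' - y'‖ ^ ((2:ℝ) - N) *
        (ENNReal.ofReal cH * ENNReal.ofReal ((3/2) * ‖x'‖) ^ (-b)) ≤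
      ENNReal.ofReal ‖x0 - up N y' 0‖ ^ ((2:ℝ) - N) * Hu N p k u y' := by
    intro y' hy'
    have hdist : ‖y' - x'‖ < r := by rw [← dist_eq_norm]; exact Metric.mem_ball.1 hy'
    have hylb : RH ≤ ‖y'‖ := by
      have h2 : ‖x'‖ - ‖y'‖ ≤ ‖y' - x'‖ := by
        have := norm_sub_norm_le x' y'
        rwa [norm_sub_rev] at this
      rw [hrdef] at hdist
      linarith
    have hyub : ‖y'‖ ≤ (3/2) * ‖x'‖ := by
      have : ‖y'‖ - ‖x'‖ ≤ ‖y' - x'‖ := norm_sub_norm_le y' x'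
      rw [hrdef] at hdist
      linarith
    have hHu1 : ENNReal.ofReal cH * ENNReal.ofReal ((3/2) * ‖x'‖) ^ (-b) ≤ Hu N p k u y' := by
      refine le_trans ?_ (hHu y' hylb)
      exact mul_le_mul_right (ennrpow_anti (ENNReal.ofReal_le_ofReal hyub) (by linarith)) _
    rw [hx0def, norm_up_sub_up (by omega : 1 ≤ N)]
    exact mul_le_mul_right hHu1 _
  have hCtop : ENNReal.ofReal cH * ENNReal.ofReal ((3/2) * ‖x'‖) ^ (-b) ≠ ⊤ :=
    ENNReal.mul_ne_top ENNReal.ofReal_ne_top (ennrpow_ofReal_ne_top (by linarith) _)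
  have hint : ENNReal.ofReal (r * ballC d) *
      (ENNReal.ofReal cH * ENNReal.ofReal ((3/2) * ‖x'‖) ^ (-b)) ≤
      ∫⁻ y', ENNReal.ofReal ‖x0 - up N y' 0‖ ^ ((2:ℝ) - N) * Hu N p k u y' := by
    have hb1 : ENNReal.ofReal (r * ballC d) ≤
        ∫⁻ y' in Metric.ball x' r, ENNReal.ofReal ‖x' - y'‖ ^ ((2:ℝ) - N) := by
      have := ballInt hd1 x' hr0 (s := (N:ℝ) - 2) (by linarith)
      rw [show ((d:ℝ) - ((N:ℝ)-2)) = 1 by rw [hdr]; ring, Real.rpow_one] at this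
      refine le_trans this (le_of_eq ?_)
      refine MeasureTheory.lintegral_congr fun y' => ?_
      rw [show (-((N:ℝ)-2)) = (2:ℝ) - N by ring]
    calc ENNReal.ofReal (r * ballC d) *
          (ENNReal.ofReal cH * ENNReal.ofReal ((3/2) * ‖x'‖) ^ (-b))
        ≤ (∫⁻ y' in Metric.ball x' r, ENNReal.ofReal ‖x' - y'‖ ^ ((2:ℝ) - N)) *
          (ENNReal.ofReal cH * ENNReal.ofReal ((3/2) * ‖x'‖) ^ (-b)) :=
          mul_le_mul_left hb1 _
      _ = ∫⁻ y' in Metric.ball x' r, ENNReal.ofReal ‖x' - y'‖ ^ ((2:ℝ) - N) *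
          (ENNReal.ofReal cH * ENNReal.ofReal ((3/2) * ‖x'‖) ^ (-b)) :=
          (MeasureTheory.lintegral_mul_const' _ _ hCtop).symm
      _ ≤ ∫⁻ y' in Metric.ball x' r,
            ENNReal.ofReal ‖x0 - up N y' 0‖ ^ ((2:ℝ) - N) * Hu N p k u y' :=
          MeasureTheory.setLIntegral_mono
            ((ENNReal.continuous_rpow_const.measurable.comp
              ((measurable_const.sub measurable_up0).norm.ennreal_ofReal)).mul
              (measurable_Hu humeas)) hball
      _ ≤ _ := MeasureTheory.setLIntegral_le_lintegral _ _
  -- conclude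
  refine le_trans (le_of_eq ?_) (le_trans (mul_le_mul_right hint c) hmain)
  rw [hc, ENNReal.ofReal_rpow_of_pos hx0,
    ENNReal.ofReal_rpow_of_pos (by linarith : (0:ℝ) < (3/2) * ‖x'‖),
    ← ENNReal.ofReal_mul hcH.le, ← ENNReal.ofReal_mul (by positivity),
    ← ENNReal.ofReal_mul (by positivity), ← ENNReal.ofReal_mul hcrealpos.le]
  congr 1
  rw [Real.mul_rpow (by norm_num) hx0.le, hrdef,
    show (-(b-1)) = 1 + (-b) from by ring, Real.rpow_add hx0, Real.rpow_one]
  ring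

end main

/-- the exponent recursion of the bootstrap -/
def aseq (p C a0 : ℝ) : ℕ → ℝ
  | 0 => a0
  | n+1 => p * aseq p C a0 n - C

lemma aseq_exists_nonpos {p C a0 : ℝ} (hp : 0 < p) (hC : 1 ≤ C) (ha0 : 0 < a0)
    (hlt : p * a0 - C < a0) : ∃ n, aseq p C a0 n ≤ 0 := by
  by_contra hcon
  push_neg at hcon
  rcases le_or_gt p 1 with hp1 | hp1
  · -- decreasing by at least 1 each step
    have hdec : ∀ n, aseq p C a0 n ≤ a0 - n := by
      intro n
      induction n with
      | zero => simp [aseq]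
      | succ n ih =>
        have hpos := hcon n
        have : p * aseq p C a0 n ≤ aseq p C a0 n := by nlinarith
        show p * aseq p C a0 n - C ≤ a0 - (n+1 : ℕ)
        push_cast
        linarith
    obtain ⟨n, hn⟩ := exists_nat_gt a0
    have := hdec n
    have := hcon n
    linarith
  · -- closed form: aseq n - A = p^n (a0 - A) with A = C/(p-1)
    set A : ℝ := C / (p - 1) with hA
    have hpm : 0 < p - 1 := by linarith
    have hApos : 0 < A := div_pos (by linarith) hpm
    have hAC : A * (p - 1) = C := by rw [hA]; field_simp [hpm.ne']
    have hform : ∀ n, aseq p C a0 n - A = p ^ n * (a0 - A) := by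
      intro n
      induction n with
      | zero => simp [aseq]
      | succ n ih =>
        show p * aseq p C a0 n - C - A = p ^ (n+1) * (a0 - A)
        have : aseq p C a0 n = A + p ^ n * (a0 - A) := by linarith
        rw [this, pow_succ]
        nlinarith [hAC]
    have ha0A : a0 < A := by nlinarith [hAC]
    obtain ⟨n, hn⟩ := pow_unbounded_of_one_lt (A / (A - a0)) hp1
    have h1 : A / (A - a0) < p ^ n := hn
    have h2 : A < p ^ n * (A - a0) := by
      rw [div_lt_iff₀ (by linarith)] at h1
      linarith
    have h3 := hform n
    have := hcon n
    nlinarith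

section final
variable {N : ℕ} {k p lam : ℝ} {u : EuclideanSpace ℝ (Fin N) → ℝ}

lemma no_sol_aux (hN : 3 ≤ N) (hlam : 0 < lam)
    (hcase : (0 < k ∧ k ≤ 1 ∧ 0 < p) ∨
      (1 < k ∧ k < (N : ℝ) - 1 ∧ 0 < p ∧ p < ((N : ℝ) - 1) / (k - 1)))
    (hsol : IsPosSolution0 N p lam k u) : False := by
  rcases hcase with ⟨hk, hk1, hp⟩ | ⟨hk1, hkN, hp, hpk⟩
  · exact huContra hN hsol hk1 (huInit hN hp hk hsol)
  · have hk : 0 < k := by linarith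
    have hN3 : (3:ℝ) ≤ (N:ℝ) := by exact_mod_cast hN
    have hpk' : p * (k - 1) < (N:ℝ) - 1 := by
      rw [lt_div_iff₀ (by linarith)] at hpk
      linarith
    set C : ℝ := (N:ℝ) - k with hC
    have hex : ∃ n, aseq p C (k-1) n ≤ 0 := by
      refine aseq_exists_nonpos hp (by rw [hC]; linarith) (by linarith) ?_
      rw [hC]; linarith
    set n : ℕ := Nat.find hex with hn
    have hnle : aseq p C (k-1) n ≤ 0 := Nat.find_spec hex
    have hmin : ∀ j, j < n → 0 < aseq p C (k-1) j := by
      intro j hj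
      have := Nat.find_min hex hj
      linarith [not_le.1 this]
    have claim : ∀ i, (∀ j, j < i → 0 < aseq p C (k-1) j) → HuLB N p k u (aseq p C (k-1) i + 1) := by
      intro i
      induction i with
      | zero =>
        intro _
        have : aseq p C (k-1) 0 + 1 = k := by simp [aseq]
        rw [this]
        exact huInit hN hp hk hsol
      | succ i ih =>
        intro hpos
        have hHi : HuLB N p k u (aseq p C (k-1) i + 1) := ih fun j hj => hpos j (by omega)
        have hai : 0 < aseq p C (k-1) i := hpos i (by omega)
        have hT := trace hN hlam hsol (by linarith) hHi
        have : aseq p C (k-1) i + 1 - 1 = aseq p C (k-1) i := by ring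
        rw [this] at hT
        have hstep := huStep hN hp hk hkN hai hT
        have heq : p * aseq p C (k-1) i + k - ((N:ℝ) - 1) = aseq p C (k-1) (i+1) + 1 := by
          show _ = p * aseq p C (k-1) i - C + 1
          rw [hC]; ring
        rw [heq] at hstep
        exact hstep
    exact huContra hN hsol (by linarith) (claim n hmin)

end final


/-- Theorem 1.2(i), nonexistence for `μ ≡ 0`: if `0 < k ≤ 1` and `p > 0`, or if
`1 < k < N-1` and `0 < p < (N-1)/(k-1)`, then for every `λ > 0` problem (1.1) with
`μ ≡ 0` has no positive solution. -/
theorem no_solution_mu_zero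
    (N : ℕ) (hN : 3 ≤ N) (k p lam : ℝ) (hlam : 0 < lam)
    (hcase : (0 < k ∧ k ≤ 1 ∧ 0 < p) ∨
      (1 < k ∧ k < (N : ℝ) - 1 ∧ 0 < p ∧ p < ((N : ℝ) - 1) / (k - 1))) :
    ¬ ∃ u : EuclideanSpace ℝ (Fin N) → ℝ, IsPosSolution0 N p lam k u := by
  rintro ⟨u, hsol⟩
  exact no_sol_aux hN hlam hcase hsol

end
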